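/- If f(x) ~ N(μ, σ²) with σ > 0 and f⁺ is a constant, then the expected improvement E[max(0, f(x) − f⁺)] equals σ[z Φ(z) + φ(z)] where z = (μ − f⁺)/σ, Φ is the standard normal CDF, and φ is the standard normal PDF. -/

import Mathlib

open MeasureTheory ProbabilityTheory Real Filter Set
open scoped ENNReal NNReal

private lemma phi_eq (x : ℝ) :
    gaussianPDFReal 0 1 x = (Real.sqrt (2 * π))⁻¹ * Real.exp (-(2⁻¹) * x ^ 2) := by
  simp only [gaussianPDFReal, NNReal.coe_one, mul_one, sub_zero]
  congr 1
  ring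

private lemma phi_even (x : ℝ) : gaussianPDFReal 0 1 (-x) = gaussianPDFReal 0 1 x := by
  rw [phi_eq, phi_eq, neg_sq]

private lemma phi_deriv (x : ℝ) :
    HasDerivAt (fun t => -gaussianPDFReal 0 1 t) (x * gaussianPDFReal 0 1 x) x := by
  have h1 : HasDerivAt (fun t : ℝ => -(2⁻¹ : ℝ) * t ^ 2) (-x) x := by
    have := (hasDerivAt_pow 2 x).const_mul (-(2⁻¹ : ℝ))
    refine this.congr_deriv ?_
    push_cast; ring
  have h2 := (h1.exp).const_mul ((Real.sqrt (2 * π))⁻¹)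
  simp only [phi_eq]
  refine h2.neg.congr_deriv ?_
  ring_nf

private lemma phi_integrable_mul : Integrable (fun x => x * gaussianPDFReal 0 1 x) := by
  have h := (integrable_mul_exp_neg_mul_sq (b := (2:ℝ)⁻¹) (by norm_num)).const_mul
    ((Real.sqrt (2 * π))⁻¹)
  refine h.congr (Eventually.of_forall fun x => ?_)
  simp only [phi_eq]; ring

private lemma phi_tendsto : Tendsto (fun t => -gaussianPDFReal 0 1 t) atTop (nhds 0) := by
  have h1 : Tendsto (fun t : ℝ => -(2⁻¹ : ℝ) * t ^ 2) atTop atBot := by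
    refine Tendsto.const_mul_atTop_of_neg (by norm_num) ?_
    exact tendsto_pow_atTop (by norm_num)
  have h2 := (Real.tendsto_exp_atBot.comp h1).const_mul ((Real.sqrt (2 * π))⁻¹)
  have h3 := h2.neg
  simp only [mul_zero, neg_zero] at h3
  refine h3.congr (fun t => ?_)
  rw [phi_eq]; rfl

private lemma int_Ioi_mul (a : ℝ) :
    ∫ x in Ioi a, x * gaussianPDFReal 0 1 x = gaussianPDFReal 0 1 a := by
  have := integral_Ioi_of_hasDerivAt_of_tendsto' (a := a)
    (fun x _ => phi_deriv x) phi_integrable_mul.integrableOn phi_tendsto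
  simpa using this

private lemma int_Ioi_phi (a : ℝ) :
    ∫ x in Ioi (-a), gaussianPDFReal 0 1 x = ((gaussianReal 0 1) (Iic a)).toReal := by
  rw [gaussianReal_apply_eq_integral 0 one_ne_zero, ENNReal.toReal_ofReal
    (setIntegral_nonneg measurableSet_Iic (fun x _ => gaussianPDFReal_nonneg 0 1 x))]
  have h := integral_comp_neg_Ioi (c := -a) (f := gaussianPDFReal 0 1)
  simp only [neg_neg] at h
  rw [← h]
  exact setIntegral_congr_fun measurableSet_Ioi (fun x _ => (phi_even x).symm)

private lemma core_integral (z : ℝ) :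
    ∫ t, max 0 (t + z) ∂(gaussianReal 0 1) =
      z * ((gaussianReal 0 1) (Iic z)).toReal + gaussianPDFReal 0 1 z := by
  have hmeas : Measurable (fun x => (gaussianPDFReal 0 1 x).toNNReal) :=
    (measurable_gaussianPDFReal 0 1).real_toNNReal
  have hd : gaussianPDF 0 1 = fun x => ((gaussianPDFReal 0 1 x).toNNReal : ℝ≥0∞) := rfl
  conv_lhs => rw [gaussianReal_of_var_ne_zero 0 one_ne_zero, hd,
    integral_withDensity_eq_integral_smul hmeas]
  have heq : ∀ x : ℝ, (gaussianPDFReal 0 1 x).toNNReal • max 0 (x + z) =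
      Set.indicator (Ioi (-z))
        (fun x => x * gaussianPDFReal 0 1 x + z * gaussianPDFReal 0 1 x) x := by
    intro x
    rw [NNReal.smul_def, Real.coe_toNNReal _ (gaussianPDFReal_nonneg 0 1 x), smul_eq_mul]
    by_cases hx : x ∈ Ioi (-z)
    · rw [Set.indicator_of_mem hx, max_eq_right (by simp only [mem_Ioi] at hx; linarith)]
      ring
    · rw [Set.indicator_of_notMem hx,
        max_eq_left (by simp only [mem_Ioi, not_lt] at hx; linarith), mul_zero]
  simp only [heq]
  rw [integral_indicator measurableSet_Ioi,
    integral_add phi_integrable_mul.integrableOn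
      ((integrable_gaussianPDFReal 0 1).const_mul z).integrableOn,
    integral_const_mul, int_Ioi_mul, int_Ioi_phi, phi_even]
  ring

/-- **Expected improvement for a Gaussian.** If `f(x) ~ N(μ, σ²)` with `σ > 0` and
`f⁺` is the current best value, then
`E[max (0, f(x) − f⁺)] = σ (z Φ(z) + φ(z))` with `z = (μ − f⁺)/σ`, where `Φ` is the
standard normal CDF and `φ` the standard normal PDF. -/
theorem expected_improvement_gaussian (m σ fplus : ℝ) (hσ : 0 < σ)
    (z : ℝ) (hz : z = (m - fplus) / σ) :
    ∫ y, max 0 (y - fplus) ∂(gaussianReal m ⟨σ ^ 2, sq_nonneg σ⟩) =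
      σ * (z * ((gaussianReal 0 1) (Set.Iic z)).toReal + gaussianPDFReal 0 1 z) := by
  have hσ' : σ ≠ 0 := hσ.ne'
  have hmap : gaussianReal m ⟨σ ^ 2, sq_nonneg σ⟩ =
      (gaussianReal 0 1).map (fun t => σ * t + m) := by
    have hcomp : (fun t : ℝ => σ * t + m) = (· + m) ∘ (σ * ·) := rfl
    rw [hcomp, ← Measure.map_map (measurable_add_const m) (measurable_const_mul σ),
      gaussianReal_map_const_mul, gaussianReal_map_add_const]
    norm_num
    rfl
  have hg : Continuous fun y : ℝ => max 0 (y - fplus) :=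
    continuous_const.max (continuous_id.sub continuous_const)
  rw [hmap, integral_map (by fun_prop) hg.aestronglyMeasurable]
  have key : ∀ t : ℝ, max 0 (σ * t + m - fplus) = σ * max 0 (t + z) := by
    intro t
    rw [mul_max_of_nonneg _ _ hσ.le, mul_zero]
    congr 1
    rw [hz]; field_simp; ring
  simp only [key]
  rw [integral_const_mul, core_integral]
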